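/- Let P ⊆ ℝ^n be a polytope and let φ : ℝ^n → ℝ be a convex function. Then the following are equivalent: (a) the effective domain of the Legendre transform of φ equals P, i.e. {u ∈ ℝ^n : the set {⟨u, x⟩ − φ(x) : x ∈ ℝ^n} is bounded above} = P; (b) sup_{x ∈ ℝ^n} |φ(x) − Ψ_P(x)| < ∞, i.e. φ is P-admissible. -/

import Mathlib

/-- The support function `Ψ_P(x) = sup_{u ∈ P} ⟨u, x⟩` of a set `P ⊆ ℝ^n`. -/
noncomputable def suppFn {n : ℕ} (P : Set (Fin n → ℝ)) (x : Fin n → ℝ) : ℝ :=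
  sSup ((fun u => ∑ i, u i * x i) '' P)

/-- Every continuous linear functional on `Fin n → ℝ` is the pairing with a vector. -/
lemma clm_apply_eq_sum {n : ℕ} (f : (Fin n → ℝ) →L[ℝ] ℝ) (y : Fin n → ℝ) :
    f y = ∑ i, y i * f (fun j => if i = j then (1:ℝ) else 0) := by
  conv_lhs => rw [pi_eq_sum_univ y]
  rw [map_sum]
  simp [smul_eq_mul]

/-- A finite convex function on `ℝ^n` has a subgradient at every point. -/
lemma exists_subgradient {n : ℕ} (φ : (Fin n → ℝ) → ℝ) (hφ : ConvexOn ℝ Set.univ φ)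
    (x : Fin n → ℝ) :
    ∃ u : Fin n → ℝ, ∀ y, (∑ i, u i * y i) - φ y ≤ (∑ i, u i * x i) - φ x := by
  have hcont : Continuous φ := hφ.locallyLipschitz.continuous
  set A : Set ((Fin n → ℝ) × ℝ) := {p | φ p.1 < p.2} with hA
  have hAconv : Convex ℝ A := by simpa [hA] using hφ.convex_strict_epigraph
  have hAopen : IsOpen A := isOpen_lt (hcont.comp continuous_fst) continuous_snd
  have hxA : (x, φ x) ∉ A := by simp [hA]
  obtain ⟨f, hf⟩ := geometric_hahn_banach_open_point hAconv hAopen hxA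
  set c := f (0, 1) with hc
  have hsplit : ∀ (y : Fin n → ℝ) (t : ℝ), f (y, t) = f (y, 0) + t * c := by
    intro y t
    have h : (y, t) = (y, 0) + t • ((0 : Fin n → ℝ), (1:ℝ)) := by
      simp [Prod.ext_iff]
    rw [h, map_add, map_smul, smul_eq_mul]
  have hcneg : c < 0 := by
    have h1 : (x, φ x + 1) ∈ A := by simp [hA]
    have h2 := hf _ h1
    rw [hsplit x (φ x + 1), hsplit x (φ x)] at h2
    nlinarith
  have hc0 : c ≠ 0 := hcneg.ne
  have hcpos : 0 < -c := neg_pos.mpr hcneg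
  have key : ∀ y, f (y, 0) + φ y * c ≤ f (x, 0) + φ x * c := by
    intro y
    by_contra h
    push_neg at h
    set d := f (y, 0) + φ y * c - (f (x, 0) + φ x * c) with hd
    have hd0 : 0 < d := by linarith
    have htpos : 0 < d / (-2 * c) := div_pos hd0 (by linarith)
    have hmem : (y, φ y + d / (-2 * c)) ∈ A := by
      simp only [hA, Set.mem_setOf_eq]
      linarith
    have h2 := hf _ hmem
    rw [hsplit y (φ y + d / (-2 * c)), hsplit x (φ x)] at h2
    have heq : (φ y + d / (-2 * c)) * c = φ y * c - d / 2 := by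
      field_simp
      ring
    rw [heq] at h2
    linarith
  refine ⟨fun i => f ((fun j => if i = j then (1:ℝ) else 0), 0) / (-c), fun y => ?_⟩
  have hrepr : ∀ z : Fin n → ℝ,
      (∑ i, (f ((fun j => if i = j then (1:ℝ) else 0), 0) / (-c)) * z i) = f (z, 0) / (-c) := by
    intro z
    have h := clm_apply_eq_sum (f.comp (ContinuousLinearMap.inl ℝ (Fin n → ℝ) ℝ)) z
    simp only [ContinuousLinearMap.comp_apply, ContinuousLinearMap.inl_apply] at h
    rw [h, Finset.sum_div]
    exact Finset.sum_congr rfl fun i _ => by ring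
  rw [hrepr y, hrepr x]
  have e1 : f (y, 0) / (-c) - φ y = (f (y, 0) + φ y * c) / (-c) := by
    field_simp
    ring
  have e2 : f (x, 0) / (-c) - φ x = (f (x, 0) + φ x * c) / (-c) := by
    field_simp
    ring
  rw [e1, e2]
  exact (div_le_div_iff_of_pos_right hcpos).mpr (key y)

/-- for a polytope `P` and a convex function `φ : ℝ^n → ℝ`, the effective
domain of the Legendre transform of `φ` equals `P` if and only if `φ` is `P`-admissible,
i.e. `sup_x |φ(x) − Ψ_P(x)| < ∞`. -/
theorem stmt_2 {n : ℕ} (P : Set (Fin n → ℝ))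
    (hP : ∃ S : Finset (Fin n → ℝ), S.Nonempty ∧ P = convexHull ℝ (S : Set (Fin n → ℝ)))
    (φ : (Fin n → ℝ) → ℝ) (hφconv : ConvexOn ℝ Set.univ φ) :
    {u : Fin n → ℝ | BddAbove (Set.range fun x => (∑ i, u i * x i) - φ x)} = P ↔
      ∃ C : ℝ, ∀ x, |φ x - suppFn P x| ≤ C := by
  obtain ⟨S, hSne, rfl⟩ := hP
  have hSP : (S : Set (Fin n → ℝ)) ⊆ convexHull ℝ (S : Set (Fin n → ℝ)) :=
    subset_convexHull ℝ _
  have hlin : ∀ x : Fin n → ℝ, IsLinearMap ℝ (fun u : Fin n → ℝ => ∑ i, u i * x i) := by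
    intro x
    constructor
    · intro u v; simp [add_mul, Finset.sum_add_distrib]
    · intro c u; simp [Finset.mul_sum, mul_assoc]
  have hbound : ∀ x : Fin n → ℝ, ∀ u ∈ convexHull ℝ (S : Set (Fin n → ℝ)),
      (∑ i, u i * x i) ≤ S.sup' hSne (fun s => ∑ i, s i * x i) := by
    intro x u hu
    have h : convexHull ℝ (S : Set (Fin n → ℝ)) ⊆
        {u : Fin n → ℝ | (∑ i, u i * x i) ≤ S.sup' hSne (fun s => ∑ i, s i * x i)} :=
      convexHull_min (fun s hs => by
        exact Finset.le_sup' (fun w : Fin n → ℝ => ∑ i, w i * x i) (Finset.mem_coe.mp hs)) (convex_halfSpace_le (hlin x) _)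
    exact h hu
  have hsupp : ∀ x, suppFn (convexHull ℝ (S : Set (Fin n → ℝ))) x
      = S.sup' hSne (fun s => ∑ i, s i * x i) := by
    intro x
    obtain ⟨s₀, hs₀, hmax⟩ := S.exists_mem_eq_sup' hSne (fun s => ∑ i, s i * x i)
    apply le_antisymm
    · apply csSup_le (⟨_, Set.mem_image_of_mem _ (hSP hs₀)⟩)
      rintro y ⟨u, hu, rfl⟩
      exact hbound x u hu
    · rw [hmax]
      apply le_csSup
      · exact ⟨S.sup' hSne (fun s => ∑ i, s i * x i), by
          rintro y ⟨u, hu, rfl⟩; exact hbound x u hu⟩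
      · exact Set.mem_image_of_mem _ (hSP hs₀)
  constructor
  · intro hdom
    have hSdom : ∀ s : Fin n → ℝ, ∃ b : ℝ, ∀ x, s ∈ S → (∑ i, s i * x i) - φ x ≤ b := by
      intro s
      by_cases hs : s ∈ S
      · have hsP : s ∈ {u : Fin n → ℝ |
            BddAbove (Set.range fun x => (∑ i, u i * x i) - φ x)} := by
          rw [hdom]; exact hSP hs
        obtain ⟨b, hb⟩ := hsP
        exact ⟨b, fun x _ => hb (Set.mem_range_self x)⟩
      · exact ⟨0, fun x hx => absurd hx hs⟩
    choose bfun hbfun using hSdom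
    set C₁ := S.sup' hSne bfun with hC₁
    have hlow : ∀ x, suppFn (convexHull ℝ (S : Set (Fin n → ℝ))) x - φ x ≤ C₁ := by
      intro x
      obtain ⟨s₀, hs₀, hmax⟩ := S.exists_mem_eq_sup' hSne (fun s => ∑ i, s i * x i)
      rw [hsupp x, hmax]
      calc (∑ i, s₀ i * x i) - φ x ≤ bfun s₀ := hbfun s₀ x hs₀
        _ ≤ C₁ := Finset.le_sup' _ hs₀
    have hup : ∀ x, φ x - suppFn (convexHull ℝ (S : Set (Fin n → ℝ))) x ≤ φ 0 := by
      intro x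
      obtain ⟨u, hu⟩ := exists_subgradient φ hφconv x
      have huP : u ∈ convexHull ℝ (S : Set (Fin n → ℝ)) := by
        rw [← hdom]
        exact ⟨(∑ i, u i * x i) - φ x, by rintro y ⟨z, rfl⟩; exact hu z⟩
      have h0 := hu 0
      simp only [Pi.zero_apply, mul_zero, Finset.sum_const_zero, zero_sub] at h0
      have hb := hbound x u huP
      rw [hsupp x]
      linarith
    refine ⟨max C₁ |φ 0|, fun x => abs_le.mpr ⟨?_, ?_⟩⟩
    · have h1 := hlow x
      have h2 : C₁ ≤ max C₁ |φ 0| := le_max_left _ _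
      linarith
    · have h1 := hup x
      have h2 : |φ 0| ≤ max C₁ |φ 0| := le_max_right _ _
      have h3 : φ 0 ≤ |φ 0| := le_abs_self _
      linarith
  · rintro ⟨C, hC⟩
    ext u
    simp only [Set.mem_setOf_eq]
    constructor
    · rintro ⟨b, hb⟩
      by_contra huP
      have hPclosed : IsClosed (convexHull ℝ (S : Set (Fin n → ℝ))) :=
        (S.finite_toSet.isCompact_convexHull (𝕜 := ℝ)).isClosed
      obtain ⟨f, r, hfP, hru⟩ :=
        geometric_hahn_banach_closed_point (convex_convexHull ℝ _) hPclosed huP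
      set v : Fin n → ℝ := fun i => f (fun j => if i = j then (1:ℝ) else 0) with hv
      have hfrepr : ∀ z : Fin n → ℝ, f z = ∑ i, z i * v i := fun z => clm_apply_eq_sum f z
      have hkey : ∀ t : ℝ, 0 ≤ t →
          suppFn (convexHull ℝ (S : Set (Fin n → ℝ))) (t • v) ≤ t * r := by
        intro t ht
        rw [hsupp]
        apply Finset.sup'_le
        intro s hs
        have h1 : (∑ i, s i * (t • v) i) = t * ∑ i, s i * v i := by
          rw [Finset.mul_sum]
          exact Finset.sum_congr rfl fun i _ => by simp [smul_eq_mul]; ring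
        rw [h1, ← hfrepr s]
        exact mul_le_mul_of_nonneg_left (hfP s (hSP hs)).le ht
      have hL : ∀ t : ℝ, (∑ i, u i * (t • v) i) = t * f u := by
        intro t
        rw [hfrepr u, Finset.mul_sum]
        exact Finset.sum_congr rfl fun i _ => by simp [smul_eq_mul]; ring
      have hpos : 0 < f u - r := by linarith
      set t := max 0 ((b + C + 1) / (f u - r)) with htdef
      have ht0 : 0 ≤ t := le_max_left _ _
      have htlarge : b + C + 1 ≤ t * (f u - r) := by
        have h2 : (b + C + 1) / (f u - r) ≤ t := le_max_right _ _
        calc b + C + 1 = (b + C + 1) / (f u - r) * (f u - r) := by field_simp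
          _ ≤ t * (f u - r) := mul_le_mul_of_nonneg_right h2 hpos.le
      have hφb := abs_le.mp (hC (t • v))
      have h3 : (∑ i, u i * (t • v) i) - φ (t • v) ≤ b := hb (Set.mem_range_self _)
      have h4 := hkey t ht0
      rw [hL t] at h3
      nlinarith [hφb.1, hφb.2]
    · intro huP
      refine ⟨C, ?_⟩
      rintro y ⟨x, rfl⟩
      have h1 := hbound x u huP
      have h2 := (abs_le.mp (hC x)).1
      rw [← hsupp x] at h1
      simp only
      linarith
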